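/- arXiv:2103.04157 — 3 statements merged into one kernel-verified Lean document; each statement's English description precedes it below -/
import Mathlib

section
/- The ℤ-linear maps φ, ψ: L → L determined by φ: u ↦ u, v ↦ v+y, x ↦ x−u, y ↦ y (identity on z, t and the two ℤ⁸ factors) and ψ: u ↦ u, v ↦ v+t, z ↦ z−u, t ↦ t (identity on x, y and the two ℤ⁸ factors) are isometries of (L,Q); moreover their ℝ-linear extensions satisfy φ(f_i(s,r)) = f_i(s+1,r) and ψ(f_i(s,r)) = f_i(s,r+1) for i = 1,2,3 and all (s,r) ∈ ℝ². -/
open scoped BigOperators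

/-- The Cartan matrix of E8 (Bourbaki numbering, 0-indexed): diagonal entries 2,
entry -1 exactly for the edges of the E8 Dynkin diagram. -/
def E8Cartan : Matrix (Fin 8) (Fin 8) ℤ :=
  !![ 2,  0, -1,  0,  0,  0,  0,  0;
      0,  2,  0, -1,  0,  0,  0,  0;
     -1,  0,  2, -1,  0,  0,  0,  0;
      0, -1, -1,  2, -1,  0,  0,  0;
      0,  0,  0, -1,  2, -1,  0,  0;
      0,  0,  0,  0, -1,  2, -1,  0;
      0,  0,  0,  0,  0, -1,  2, -1;
      0,  0,  0,  0,  0,  0, -1,  2]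

/-- Integer value `dᵀ C d'` of the E8 Cartan pairing. -/
def pairCZ (d d' : Fin 8 → ℤ) : ℤ := ∑ i, ∑ j, d i * E8Cartan i j * d' j

/-- Real value `wᵀ C w'` of the (real extension of the) E8 Cartan pairing. -/
def pairCR (w w' : Fin 8 → ℝ) : ℝ := ∑ i, ∑ j, w i * (E8Cartan i j : ℝ) * w' j

/-- The `−E8` pairing, real coefficients. -/
def innE8R (w w' : Fin 8 → ℝ) : ℝ := -pairCR w w'

/-- The `−E8` pairing, integer coefficients. -/
def innE8Z (d d' : Fin 8 → ℤ) : ℤ := -pairCZ d d'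

/-- The K3 lattice `L = ℤ⁶ ⊕ ℤ⁸ ⊕ ℤ⁸`. -/
abbrev LZ := (Fin 6 → ℤ) × (Fin 8 → ℤ) × (Fin 8 → ℤ)

/-- `L_ℝ = ℝ⁶ ⊕ ℝ⁸ ⊕ ℝ⁸`. -/
abbrev LR := (Fin 6 → ℝ) × (Fin 8 → ℝ) × (Fin 8 → ℝ)

/-- The K3 bilinear form `Q` (integer version).  Coordinates `0,…,5` of the first
factor are `u, v, x, y, z, t`; one has `Q(u,v) = Q(x,y) = Q(z,t) = 1`, all other
pairings among `u,…,t` vanish, each `ℤ⁸` factor carries `−C`, and the three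
factors are mutually orthogonal. -/
def QZ (d d' : LZ) : ℤ :=
  (d.1 0 * d'.1 1 + d.1 1 * d'.1 0 + d.1 2 * d'.1 3 + d.1 3 * d'.1 2
    + d.1 4 * d'.1 5 + d.1 5 * d'.1 4)
  - pairCZ d.2.1 d'.2.1 - pairCZ d.2.2 d'.2.2

/-- The K3 bilinear form `Q`, extended `ℝ`-bilinearly to `L_ℝ`. -/
def QR (w w' : LR) : ℝ :=
  (w.1 0 * w'.1 1 + w.1 1 * w'.1 0 + w.1 2 * w'.1 3 + w.1 3 * w'.1 2
    + w.1 4 * w'.1 5 + w.1 5 * w'.1 4)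
  - pairCR w.2.1 w'.2.1 - pairCR w.2.2 w'.2.2

/-- The inclusion `L → L_ℝ`. -/
def incl (d : LZ) : LR :=
  (fun i => (d.1 i : ℝ), fun i => (d.2.1 i : ℝ), fun i => (d.2.2 i : ℝ))

/-- The family of 45 real numbers `1`, `eᵢ` (`1 ≤ i ≤ 8`) and `eᵢ·eⱼ` (`1 ≤ i ≤ j ≤ 8`). -/
def fam45 (e : Fin 8 → ℝ) : Option (Fin 8 ⊕ {p : Fin 8 × Fin 8 // p.1 ≤ p.2}) → ℝ
  | none => 1
  | some (Sum.inl i) => e i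
  | some (Sum.inr p) => e p.1.1 * e p.1.2

/-- `φ` on the `ℤ⁶`/`ℝ⁶` factor: `u ↦ u`, `v ↦ v + y`, `x ↦ x − u`, `y ↦ y`,
`z ↦ z`, `t ↦ t` (in coordinates). -/
def phi6 {R : Type*} [Ring R] (w : Fin 6 → R) : Fin 6 → R :=
  ![w 0 - w 2, w 1, w 2, w 1 + w 3, w 4, w 5]

/-- `φ : L → L`, identity on the two `ℤ⁸` factors. -/
def phiZ (d : LZ) : LZ := (phi6 d.1, d.2.1, d.2.2)

/-- The `ℝ`-linear extension of `φ`. -/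
def phiR (w : LR) : LR := (phi6 w.1, w.2.1, w.2.2)

/-- `ψ` on the `ℤ⁶`/`ℝ⁶` factor: `u ↦ u`, `v ↦ v + t`, `x ↦ x`, `y ↦ y`,
`z ↦ z − u`, `t ↦ t` (in coordinates). -/
def psi6 {R : Type*} [Ring R] (w : Fin 6 → R) : Fin 6 → R :=
  ![w 0 - w 4, w 1, w 2, w 3, w 4, w 1 + w 5]

/-- `ψ : L → L`, identity on the two `ℤ⁸` factors. -/
def psiZ (d : LZ) : LZ := (psi6 d.1, d.2.1, d.2.2)

/-- The `ℝ`-linear extension of `ψ`. -/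
def psiR (w : LR) : LR := (psi6 w.1, w.2.1, w.2.2)

/-- `f₁(s,r) = 2u + v + s·y + r·t`. -/
def f1 (s r : ℝ) : LR := (![2, 1, 0, s, 0, r], 0, 0)

/-- `f₂(s,r) = x − s·u + 2y + a`, where `a = (0, e)`. -/
def f2 (e : Fin 8 → ℝ) (s r : ℝ) : LR := (![-s, 0, 1, 2, 0, 0], 0, e)

/-- `f₃(s,r) = z − r·u + 2t + b`, where `b = (e, 0)`. -/
def f3 (e : Fin 8 → ℝ) (s r : ℝ) : LR := (![-r, 0, 0, 0, 1, 2], e, 0)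

@[simp] lemma vec6_five {R : Type*} (a b c d e f : R) :
    ![a, b, c, d, e, f] 5 = f := rfl

/-- `φ` and `ψ` are isometries of `(L, Q)` and their `ℝ`-linear extensions satisfy
`φ(fᵢ(s,r)) = fᵢ(s+1,r)` and `ψ(fᵢ(s,r)) = fᵢ(s,r+1)` for `i = 1, 2, 3`. -/
theorem statement8 (e : Fin 8 → ℝ) :
    (∀ d d' : LZ, QZ (phiZ d) (phiZ d') = QZ d d') ∧
    (∀ d d' : LZ, QZ (psiZ d) (psiZ d') = QZ d d') ∧
    (∀ s r : ℝ,
      (phiR (f1 s r) = f1 (s + 1) r ∧ phiR (f2 e s r) = f2 e (s + 1) r ∧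
        phiR (f3 e s r) = f3 e (s + 1) r) ∧
      (psiR (f1 s r) = f1 s (r + 1) ∧ psiR (f2 e s r) = f2 e s (r + 1) ∧
        psiR (f3 e s r) = f3 e s (r + 1))) := by
  refine ⟨?_, ?_, ?_⟩
  · intro d d'
    simp only [QZ, phiZ, phi6, Matrix.cons_val_zero, Matrix.cons_val_one, Matrix.head_cons,
      Matrix.cons_val_two, Matrix.tail_cons, Matrix.cons_val_three, Matrix.cons_val_four,
      Matrix.cons_val_fin_one, Matrix.cons_val_succ, vec6_five]
    ring
  · intro d d'
    simp only [QZ, psiZ, psi6, Matrix.cons_val_zero, Matrix.cons_val_one, Matrix.head_cons,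
      Matrix.cons_val_two, Matrix.tail_cons, Matrix.cons_val_three, Matrix.cons_val_four,
      Matrix.cons_val_fin_one, Matrix.cons_val_succ, vec6_five]
    ring
  · intro s r
    refine ⟨⟨?_, ?_, ?_⟩, ?_, ?_, ?_⟩ <;>
    · refine Prod.ext (funext fun i => ?_) rfl
      fin_cases i <;>
        simp [phiR, psiR, phi6, psi6, f1, f2, f3, Matrix.cons_val_succ] <;> ring
end

section
/- Assume |(e,e)| ≤ 1/2, where (e,e) = −eᵀCe. Then for every (s,r) ∈ ℝ²: Q(f₁(s,r),f₁(s,r)) = 4 > 0, Q(f₂(s,r),f₂(s,r)) = 4 + (e,e) > 0, Q(f₃(s,r),f₃(s,r)) = 4 + (e,e) > 0, and Q(f₂(s,r),f₃(s,r)) = Q(f₁(s,r),f₂(s,r)) = Q(f₁(s,r),f₃(s,r)) = 0. -/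
open scoped BigOperators

lemma cons_val_five' {α : Type*} (a b c d e f : α) : ![a,b,c,d,e,f] 5 = f := rfl

lemma pairCR_zero_left (w : Fin 8 → ℝ) : pairCR 0 w = 0 := by
  simp [pairCR]

lemma pairCR_zero_right (w : Fin 8 → ℝ) : pairCR w 0 = 0 := by
  simp [pairCR]

/-- If `|(e,e)| ≤ 1/2` then for every `(s,r) ∈ ℝ²`: `Q(f₁,f₁) = 4 > 0`,
`Q(f₂,f₂) = Q(f₃,f₃) = 4 + (e,e) > 0`, and `Q(f₂,f₃) = Q(f₁,f₂) = Q(f₁,f₃) = 0`. -/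
theorem statement9 (e : Fin 8 → ℝ) (he : |innE8R e e| ≤ 1 / 2) (s r : ℝ) :
    (QR (f1 s r) (f1 s r) = 4 ∧ 0 < QR (f1 s r) (f1 s r)) ∧
    (QR (f2 e s r) (f2 e s r) = 4 + innE8R e e ∧ 0 < QR (f2 e s r) (f2 e s r)) ∧
    (QR (f3 e s r) (f3 e s r) = 4 + innE8R e e ∧ 0 < QR (f3 e s r) (f3 e s r)) ∧
    QR (f2 e s r) (f3 e s r) = 0 ∧ QR (f1 s r) (f2 e s r) = 0 ∧
    QR (f1 s r) (f3 e s r) = 0 := by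
  have h1 : -(1/2 : ℝ) ≤ innE8R e e := by cases abs_le.mp he with | intro a b => linarith
  have hQ1 : QR (f1 s r) (f1 s r) = 4 := by
    simp [QR, f1, pairCR_zero_left, Matrix.cons_val_succ, cons_val_five']; try ring
  have hQ2 : QR (f2 e s r) (f2 e s r) = 4 + innE8R e e := by
    simp [QR, f2, innE8R, pairCR_zero_left, Matrix.cons_val_succ, cons_val_five']; try ring
  have hQ3 : QR (f3 e s r) (f3 e s r) = 4 + innE8R e e := by
    simp [QR, f3, innE8R, pairCR_zero_left, pairCR_zero_right, Matrix.cons_val_succ, cons_val_five']; try ring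
  have h23 : QR (f2 e s r) (f3 e s r) = 0 := by
    simp [QR, f2, f3, pairCR_zero_left, pairCR_zero_right, Matrix.cons_val_succ, cons_val_five']; try ring
  have h12 : QR (f1 s r) (f2 e s r) = 0 := by
    simp [QR, f1, f2, pairCR_zero_left, pairCR_zero_right, Matrix.cons_val_succ, cons_val_five']; try ring
  have h13 : QR (f1 s r) (f3 e s r) = 0 := by
    simp [QR, f1, f3, pairCR_zero_left, pairCR_zero_right, Matrix.cons_val_succ, cons_val_five']; try ring
  exact ⟨⟨hQ1, by rw [hQ1]; norm_num⟩, ⟨hQ2, by rw [hQ2]; linarith⟩,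
    ⟨hQ3, by rw [hQ3]; linarith⟩, h23, h12, h13⟩
end

section
/- Assume the 45 real numbers 1, e_i (1 ≤ i ≤ 8), and e_i·e_j (1 ≤ i ≤ j ≤ 8) are linearly independent over ℚ. Then for every (s,r) ∈ ℝ² there is no d ∈ L with Q(d,d) = −2 and Q(d,f₁(s,r)) = Q(d,f₂(s,r)) = Q(d,f₃(s,r)) = 0. -/
open scoped BigOperators

/-! ### Auxiliary machinery for the proof -/

/-- `cvec q = Cᵀ q` (equivalently `C q`, as `C` is symmetric). -/
def cvec (q : Fin 8 → ℤ) (j : Fin 8) : ℤ := ∑ i, q i * E8Cartan i j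

lemma pairCR_cast_left (q : Fin 8 → ℤ) (e : Fin 8 → ℝ) :
    pairCR (fun i => (q i : ℝ)) e = ∑ j, (cvec q j : ℝ) * e j := by
  rw [pairCR, Finset.sum_comm]
  refine Finset.sum_congr rfl fun j _ => ?_
  rw [cvec]
  push_cast
  rw [Finset.sum_mul]

lemma pairCZ_diag (q : Fin 8 → ℤ) : pairCZ q q = ∑ j, cvec q j * q j := by
  rw [pairCZ, Finset.sum_comm]
  exact Finset.sum_congr rfl fun j _ => (Finset.sum_mul _ _ _).symm

lemma pairCZ_expand (q : Fin 8 → ℤ) : pairCZ q q =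
    2*(q 0^2+q 1^2+q 2^2+q 3^2+q 4^2+q 5^2+q 6^2+q 7^2)
    - 2*(q 0*q 2 + q 1*q 3 + q 2*q 3 + q 3*q 4 + q 4*q 5 + q 5*q 6 + q 6*q 7) := by
  simp [pairCZ, Fin.sum_univ_succ, E8Cartan, Matrix.cons_val_zero, Matrix.cons_val_succ,
    show Fin.succ (2 : Fin 7) = 3 from rfl, show Fin.succ (3 : Fin 7) = 4 from rfl,
    show Fin.succ (4 : Fin 7) = 5 from rfl, show Fin.succ (5 : Fin 7) = 6 from rfl,
    show Fin.succ (6 : Fin 7) = 7 from rfl, show Fin.succ (2 : Fin 6) = 3 from rfl,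
    show Fin.succ (3 : Fin 6) = 4 from rfl, show Fin.succ (4 : Fin 6) = 5 from rfl,
    show Fin.succ (5 : Fin 6) = 6 from rfl, show Fin.succ (2 : Fin 5) = 3 from rfl,
    show Fin.succ (3 : Fin 5) = 4 from rfl, show Fin.succ (4 : Fin 5) = 5 from rfl,
    show Fin.succ (2 : Fin 4) = 3 from rfl, show Fin.succ (3 : Fin 4) = 4 from rfl,
    show Fin.succ (2 : Fin 3) = 3 from rfl]
  ring

lemma pairCZ_nonneg (q : Fin 8 → ℤ) : 0 ≤ pairCZ q q := by
  rw [pairCZ_expand]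
  nlinarith [sq_nonneg (2*q 0 - q 2), sq_nonneg (2*q 1 - q 3), sq_nonneg (3*q 2 - 2*q 3),
    sq_nonneg (5*q 3 - 6*q 4), sq_nonneg (4*q 4 - 5*q 5), sq_nonneg (3*q 5 - 4*q 6),
    sq_nonneg (2*q 6 - 3*q 7), sq_nonneg (q 7)]

/-- The only consequence of the independence hypothesis that we need:
an integral linear relation among `1` and the `eⱼ` must be trivial. -/
lemma key45 (e : Fin 8 → ℝ) (he : LinearIndependent ℚ (fam45 e)) (m : ℤ) (n : Fin 8 → ℤ)
    (h : (m : ℝ) + ∑ j, (n j : ℝ) * e j = 0) : m = 0 ∧ ∀ j, n j = 0 := by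
  classical
  set g : Option (Fin 8 ⊕ {p : Fin 8 × Fin 8 // p.1 ≤ p.2}) → ℚ :=
    fun o => match o with
      | none => (m : ℚ)
      | some (Sum.inl i) => (n i : ℚ)
      | some (Sum.inr _) => 0 with hg
  have hsum : ∑ i, g i • fam45 e i = 0 := by
    rw [Fintype.sum_option, Fintype.sum_sum_type]
    have h1 : g none • fam45 e none = (m : ℝ) := by
      simp [hg, fam45, Rat.smul_def]
    have h2 : ∀ i : Fin 8, g (some (Sum.inl i)) • fam45 e (some (Sum.inl i))
        = (n i : ℝ) * e i := by
      intro i; simp [hg, fam45, Rat.smul_def]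
    have h3 : ∀ p, g (some (Sum.inr p)) • fam45 e (some (Sum.inr p)) = 0 := by
      intro p; simp [hg]
    rw [h1]
    rw [Finset.sum_congr rfl fun i _ => h2 i, Finset.sum_congr rfl fun p _ => h3 p]
    simpa using h
  have hz := Fintype.linearIndependent_iff.mp he g hsum
  constructor
  · have := hz none
    simpa [hg] using this
  · intro j
    have := hz (some (Sum.inl j))
    simpa [hg] using this

lemma QR_f1 (d : LZ) (s r : ℝ) :
    QR (incl d) (f1 s r)
      = (d.1 0 : ℝ) + 2 * (d.1 1 : ℝ) + s * (d.1 2 : ℝ) + r * (d.1 4 : ℝ) := by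
  simp only [QR, incl, f1, pairCR_zero_right,
    show (![(2:ℝ),1,0,s,0,r]) 0 = 2 from rfl, show (![(2:ℝ),1,0,s,0,r]) 1 = 1 from rfl,
    show (![(2:ℝ),1,0,s,0,r]) 2 = 0 from rfl, show (![(2:ℝ),1,0,s,0,r]) 3 = s from rfl,
    show (![(2:ℝ),1,0,s,0,r]) 4 = 0 from rfl, show (![(2:ℝ),1,0,s,0,r]) 5 = r from rfl]
  ring

lemma QR_f2 (e : Fin 8 → ℝ) (d : LZ) (s r : ℝ) :
    QR (incl d) (f2 e s r)
      = -s * (d.1 1 : ℝ) + 2 * (d.1 2 : ℝ) + (d.1 3 : ℝ)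
        - ∑ j, (cvec d.2.2 j : ℝ) * e j := by
  simp only [QR, incl, f2, pairCR_zero_right, pairCR_cast_left,
    show (![-s,(0:ℝ),1,2,0,0]) 0 = -s from rfl, show (![-s,(0:ℝ),1,2,0,0]) 1 = 0 from rfl,
    show (![-s,(0:ℝ),1,2,0,0]) 2 = 1 from rfl, show (![-s,(0:ℝ),1,2,0,0]) 3 = 2 from rfl,
    show (![-s,(0:ℝ),1,2,0,0]) 4 = 0 from rfl, show (![-s,(0:ℝ),1,2,0,0]) 5 = 0 from rfl]
  ring

lemma QR_f3 (e : Fin 8 → ℝ) (d : LZ) (s r : ℝ) :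
    QR (incl d) (f3 e s r)
      = -r * (d.1 1 : ℝ) + 2 * (d.1 4 : ℝ) + (d.1 5 : ℝ)
        - ∑ j, (cvec d.2.1 j : ℝ) * e j := by
  simp only [QR, incl, f3, pairCR_zero_right, pairCR_cast_left,
    show (![-r,(0:ℝ),0,0,1,2]) 0 = -r from rfl, show (![-r,(0:ℝ),0,0,1,2]) 1 = 0 from rfl,
    show (![-r,(0:ℝ),0,0,1,2]) 2 = 0 from rfl, show (![-r,(0:ℝ),0,0,1,2]) 3 = 0 from rfl,
    show (![-r,(0:ℝ),0,0,1,2]) 4 = 1 from rfl, show (![-r,(0:ℝ),0,0,1,2]) 5 = 2 from rfl]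
  ring

/-- If the 45 numbers `1`, `eᵢ`, `eᵢ·eⱼ` are linearly independent over `ℚ`, then
for every `(s,r) ∈ ℝ²` there is no `d ∈ L` with `Q(d,d) = −2` and
`Q(d,f₁(s,r)) = Q(d,f₂(s,r)) = Q(d,f₃(s,r)) = 0`. -/
theorem statement10 (e : Fin 8 → ℝ) (he : LinearIndependent ℚ (fam45 e)) (s r : ℝ) :
    ¬ ∃ d : LZ, QZ d d = -2 ∧ QR (incl d) (f1 s r) = 0 ∧
      QR (incl d) (f2 e s r) = 0 ∧ QR (incl d) (f3 e s r) = 0 := by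
  rintro ⟨⟨w, p, q⟩, hdd, h1, h2, h3⟩
  rw [QR_f1] at h1
  rw [QR_f2] at h2
  rw [QR_f3] at h3
  simp only at h1 h2 h3
  -- the combination `V·eq₁ + X·eq₂ + Z·eq₃`
  have hcomb : ((w 0 * w 1 + 2 * w 1 ^ 2 + 2 * w 2 ^ 2 + w 2 * w 3
        + 2 * w 4 ^ 2 + w 4 * w 5 : ℤ) : ℝ)
      + ∑ j, ((-(w 2 * cvec q j + w 4 * cvec p j) : ℤ) : ℝ) * e j = 0 := by
    have hsplit : ∑ j, ((-(w 2 * cvec q j + w 4 * cvec p j) : ℤ) : ℝ) * e j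
        = -((w 2 : ℝ) * ∑ j, (cvec q j : ℝ) * e j)
          - (w 4 : ℝ) * ∑ j, (cvec p j : ℝ) * e j := by
      rw [Finset.mul_sum, Finset.mul_sum, ← Finset.sum_neg_distrib, ← Finset.sum_sub_distrib]
      refine Finset.sum_congr rfl fun j _ => ?_
      push_cast
      ring
    rw [hsplit]
    push_cast
    linear_combination (w 1 : ℝ) * h1 + (w 2 : ℝ) * h2 + (w 4 : ℝ) * h3
  obtain ⟨hA, -⟩ := key45 e he _ _ hcomb
  -- rewrite the norm condition
  have hdd' : 2 * (w 0 * w 1 + w 2 * w 3 + w 4 * w 5) - pairCZ p p - pairCZ q q = -2 := by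
    rw [QZ] at hdd
    simp only at hdd
    linear_combination hdd
  -- deduce `V = X = Z = 0`
  have hp0 := pairCZ_nonneg p
  have hq0 := pairCZ_nonneg q
  have hS : w 1 ^ 2 + w 2 ^ 2 + w 4 ^ 2 = 0 := by
    have h4 : 4 * (w 1 ^ 2 + w 2 ^ 2 + w 4 ^ 2) ≤ 2 := by nlinarith
    have h1' := sq_nonneg (w 1)
    have h2' := sq_nonneg (w 2)
    have h4' := sq_nonneg (w 4)
    nlinarith
  have hV : w 1 = 0 := by nlinarith [sq_nonneg (w 1), sq_nonneg (w 2), sq_nonneg (w 4)]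
  have hX : w 2 = 0 := by nlinarith [sq_nonneg (w 1), sq_nonneg (w 2), sq_nonneg (w 4)]
  have hZ : w 4 = 0 := by nlinarith [sq_nonneg (w 1), sq_nonneg (w 2), sq_nonneg (w 4)]
  -- now eq₂ and eq₃ force `q = 0` resp. `p = 0` (in the sense `C q = 0`, `C p = 0`)
  have h2' : ((w 3 : ℤ) : ℝ) + ∑ j, ((-(cvec q j) : ℤ) : ℝ) * e j = 0 := by
    have : ∑ j, ((-(cvec q j) : ℤ) : ℝ) * e j = -∑ j, (cvec q j : ℝ) * e j := by
      rw [← Finset.sum_neg_distrib]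
      exact Finset.sum_congr rfl fun j _ => by push_cast; ring
    rw [this]
    rw [hV, hX] at h2
    push_cast at h2 ⊢
    linarith
  have h3' : ((w 5 : ℤ) : ℝ) + ∑ j, ((-(cvec p j) : ℤ) : ℝ) * e j = 0 := by
    have : ∑ j, ((-(cvec p j) : ℤ) : ℝ) * e j = -∑ j, (cvec p j : ℝ) * e j := by
      rw [← Finset.sum_neg_distrib]
      exact Finset.sum_congr rfl fun j _ => by push_cast; ring
    rw [this]
    rw [hV, hZ] at h3
    push_cast at h3 ⊢
    linarith
  obtain ⟨hY, hcq⟩ := key45 e he _ _ h2'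
  obtain ⟨hT, hcp⟩ := key45 e he _ _ h3'
  have hq : pairCZ q q = 0 := by
    rw [pairCZ_diag]
    refine Finset.sum_eq_zero fun j _ => ?_
    have := hcq j
    have hj : cvec q j = 0 := by omega
    rw [hj, zero_mul]
  have hp : pairCZ p p = 0 := by
    rw [pairCZ_diag]
    refine Finset.sum_eq_zero fun j _ => ?_
    have := hcp j
    have hj : cvec p j = 0 := by omega
    rw [hj, zero_mul]
  rw [hV, hX, hZ, hp, hq] at hdd'
  simp at hdd'
end
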